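/- arXiv:1505.04175 — 2 statements merged into one kernel-verified Lean document; each statement's English description precedes it below -/
import Mathlib

section
/- Let G be a group with finite generating set X, and suppose PCL_{G,X}(n) = o(n) (i.e., for every ε > 0 there is N with PCL_{G,X}(2n) < εn for all n ≥ N). Then (1/2)·h_{G,X} ≤ k_{G,X} ≤ h_{G,X}, where h_{G,X} = limsup_n log γ_{G,X}(n)^{1/n} is the exponential growth rate and k_{G,X} = limsup_n log ξ_{G,X}(n)^{1/n} is the exponential conjugacy growth rate. -/
/- Common definitions: words over a generating set, word length, geodesic and
quasi-geodesic words, cyclic permutations, PC-conjugators, the (permutation)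
conjugacy length functions, hyperbolic Cayley graphs, and relative hyperbolicity. -/

namespace PCLPaper

variable {G : Type*} [Group G]

/-- `w` is a word over the alphabet `X ⊆ G`. -/
def IsWord (X : Set G) (w : List G) : Prop := ∀ x ∈ w, x ∈ X

/-- `X` generates `G` as a monoid. -/
def Generates (X : Set G) : Prop := ∀ g : G, ∃ w : List G, IsWord X w ∧ w.prod = g

/-- The word length `|g|_X` of `g` with respect to `X`. -/
noncomputable def wlen (X : Set G) (g : G) : ℕ :=
  sInf {n | ∃ w : List G, IsWord X w ∧ w.prod = g ∧ w.length = n}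

/-- The word metric `d_X(g,h)`. -/
noncomputable def wdist (X : Set G) (g h : G) : ℕ := wlen X (g⁻¹ * h)

/-- The ball `B_X(r)` of radius `r` about the identity. -/
def ball (X : Set G) (r : ℝ) : Set G := {g : G | (wlen X g : ℝ) ≤ r}

/-- A geodesic word: its length equals the word length of the element it represents. -/
def IsGeodesicWord (X : Set G) (w : List G) : Prop :=
  IsWord X w ∧ w.length = wlen X w.prod

/-- `u'` is a cyclic permutation of `u`. -/
def IsCyclicPerm (u u' : List G) : Prop := ∃ i : ℕ, u' = u.drop i ++ u.take i

/-- `w` is a PC-conjugator for the words `u, v`: it conjugates a cyclic permutation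
of `u` to a cyclic permutation of `v`. -/
def IsPCConjugator (u v : List G) (w : G) : Prop :=
  ∃ u' v' : List G, IsCyclicPerm u u' ∧ IsCyclicPerm v v' ∧
    w * u'.prod = v'.prod * w

/-- `PCL_{G,X}(u,v)`: the minimal `X`-length of a PC-conjugator of `u` and `v`. -/
noncomputable def PCLpair (X : Set G) (u v : List G) : ℕ :=
  sInf {n | ∃ w : G, IsPCConjugator u v w ∧ wlen X w = n}

/-- The permutation conjugacy length function `PCL_{G,X}(n)`: the maximum of
`PCL_{G,X}(u,v)` over geodesic words `u, v` representing conjugate elements with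
`ℓ(u) + ℓ(v) ≤ n`. -/
noncomputable def PCL (X : Set G) (n : ℕ) : ℕ :=
  sSup {k | ∃ u v : List G, IsGeodesicWord X u ∧ IsGeodesicWord X v ∧
    IsConj u.prod v.prod ∧ u.length + v.length ≤ n ∧ PCLpair X u v = k}

/-- The minimal `X`-length of a conjugator `w` with `w * a = b * w`. -/
noncomputable def CLFpair (X : Set G) (a b : G) : ℕ :=
  sInf {n | ∃ w : G, w * a = b * w ∧ wlen X w = n}

/-- The conjugacy length function `CLF_{G,X}(n)`. -/
noncomputable def CLF (X : Set G) (n : ℕ) : ℕ :=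
  sSup {k | ∃ u v : List G, IsWord X u ∧ IsWord X v ∧
    IsConj u.prod v.prod ∧ u.length + v.length ≤ n ∧ CLFpair X u.prod v.prod = k}

/-- A `(λ,c)`-quasi-geodesic word over `S`. -/
def IsQuasiGeodesicWord (S : Set G) (lam c : ℝ) (w : List G) : Prop :=
  IsWord S w ∧ ∀ i j : ℕ, i ≤ j → j ≤ w.length →
    (j : ℝ) - (i : ℝ) ≤ lam * (wdist S (w.take i).prod (w.take j).prod : ℝ) + c

/-- The vertices of the path in the Cayley graph starting at `g` and labelled by `w`. -/
def pathVertices (g : G) (w : List G) : Set G :=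
  {h : G | ∃ i ≤ w.length, h = g * (w.take i).prod}

/-- The Cayley graph `Γ(G,S)` is `δ`-hyperbolic: geodesic triangles are `δ`-slim. -/
def SlimTriangles (S : Set G) (δ : ℝ) : Prop :=
  ∀ (g : G) (p q r : List G), IsGeodesicWord S p → IsGeodesicWord S q →
    IsGeodesicWord S r → p.prod * q.prod = r.prod →
    ∀ x ∈ pathVertices g p,
      ∃ y ∈ pathVertices (g * p.prod) q ∪ pathVertices g r, (wdist S x y : ℝ) ≤ δ

/-- The relative generating set `S = X ∪ ⋃_ω (H_ω \ {1})`. -/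
def relGen {Ω : Type*} (X : Set G) (H : Ω → Subgroup G) : Set G :=
  X ∪ ⋃ ω, ((H ω : Set G) \ {1})

/-- The index pair `(i,j)` describes an `Hω`-component of the word `p`:
a maximal subpath all of whose edge labels lie in `Hω`. -/
def IsComponent (Hω : Subgroup G) (p : List G) (i j : ℕ) : Prop :=
  i < j ∧ j ≤ p.length ∧ (∀ k, i ≤ k → k < j → p.getD k 1 ∈ Hω) ∧
  (i = 0 ∨ p.getD (i - 1) 1 ∉ Hω) ∧ (j = p.length ∨ p.getD j 1 ∉ Hω)

/-- The `Hω`-components `(i,j)` of the path `(x,p)` and `(k,l)` of the path `(y,q)`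
are connected: all their vertices lie in the same left coset of `Hω`. -/
def ConnectedAt (Hω : Subgroup G) (x : G) (p : List G) (i j : ℕ)
    (y : G) (q : List G) (k l : ℕ) : Prop :=
  IsComponent Hω p i j ∧ IsComponent Hω q k l ∧
    (x * (p.take i).prod)⁻¹ * (y * (q.take k).prod) ∈ Hω

/-- The two components are connected, for some common parabolic subgroup. -/
def ConnectedComponents {Ω : Type*} (H : Ω → Subgroup G) (x : G) (p : List G) (i j : ℕ)
    (y : G) (q : List G) (k l : ℕ) : Prop :=
  ∃ ω, ConnectedAt (H ω) x p i j y q k l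

/-- The bounded coset penetration property for the pair `(G, {H_ω})`. -/
def BCP {Ω : Type*} (X : Set G) (H : Ω → Subgroup G) : Prop :=
  ∀ lam : ℝ, 1 ≤ lam → ∃ a : ℝ, 0 < a ∧
    ∀ (g : G) (p q : List G),
      IsQuasiGeodesicWord (relGen X H) lam 0 p →
      IsQuasiGeodesicWord (relGen X H) lam 0 q →
      (wdist X (g * p.prod) (g * q.prod) : ℝ) ≤ 1 →
      (∀ ω i j, IsComponent (H ω) p i j →
        a ≤ (wdist X (g * (p.take i).prod) (g * (p.take j).prod) : ℝ) →
        ∃ k l, ConnectedAt (H ω) g p i j g q k l) ∧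
      (∀ i j k l, ConnectedComponents H g p i j g q k l →
        (wdist X (g * (p.take i).prod) (g * (q.take k).prod) : ℝ) ≤ a ∧
        (wdist X (g * (p.take j).prod) (g * (q.take l).prod) : ℝ) ≤ a)

/-- `G` is hyperbolic relative to the subgroups `{H_ω}`, with respect to the
generating set `X`. -/
def RelativelyHyperbolic {Ω : Type*} (X : Set G) (H : Ω → Subgroup G) : Prop :=
  (∃ δ : ℝ, 0 ≤ δ ∧ SlimTriangles (relGen X H) δ) ∧ BCP X H

/-- The generating set of a subgroup `K` induced by `X`: the set `X ∩ K`,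
viewed inside `K`. -/
def subGen (X : Set G) (K : Subgroup G) : Set K := {h : K | (h : G) ∈ X}

/-- The base vertex of the `a`-th side of a polygon with sides `sides` based at `g`. -/
def sideBase (g : G) (sides : List (List G)) (a : ℕ) : G :=
  g * ((sides.take a).flatten).prod

/-- Side `a` of the polygon is a single component, isolated in the polygon. -/
def SideIsolated {Ω : Type*} (H : Ω → Subgroup G) (g : G) (sides : List (List G))
    (a : ℕ) : Prop :=
  (∃ ω, IsComponent (H ω) (sides.getD a []) 0 (sides.getD a []).length) ∧
  ∀ b i j, b < sides.length → ¬(b = a ∧ i = 0 ∧ j = (sides.getD a []).length) →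
    ¬ ConnectedComponents H (sideBase g sides a) (sides.getD a []) 0
        (sides.getD a []).length (sideBase g sides b) (sides.getD b []) i j

/-- `D` satisfies the conclusion of the polygon lemma: in any closed polygon whose
distinguished sides are isolated components and whose remaining sides are
`(λ,c)`-quasi-geodesics, the total `X`-length of the distinguished sides is at
most `D · (number of sides)`. -/
def PolygonConst {Ω : Type*} (X : Set G) (H : Ω → Subgroup G) (lam c D : ℝ) : Prop :=
  ∀ (g : G) (sides : List (List G)) (I : Finset ℕ),
    (sides.flatten).prod = 1 →
    (∀ a ∈ I, a < sides.length ∧ SideIsolated H g sides a) →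
    (∀ a, a < sides.length → a ∉ I →
      IsQuasiGeodesicWord (relGen X H) lam c (sides.getD a [])) →
    ∑ a ∈ I, (wlen X ((sides.getD a []).prod) : ℝ) ≤ D * sides.length

/-- `v` is derived from `u`: obtained by replacing subwords of `u` whose letters all
lie in a single parabolic subgroup by the single element of `G` they represent. -/
def IsDerived {Ω : Type*} (X : Set G) (H : Ω → Subgroup G) (u v : List G) : Prop :=
  ∃ blocks : List (List G), blocks.flatten = u ∧ (∀ b ∈ blocks, b ≠ []) ∧
    (∀ b ∈ blocks, b.length = 1 ∨ ∃ ω, IsWord (X ∩ (H ω : Set G)) b) ∧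
    v = blocks.map List.prod

/-- No subword of `v` of length greater than one represents a parabolic element. -/
def NoLongParabolicSubword {Ω : Type*} (H : Ω → Subgroup G) (v : List G) : Prop :=
  ∀ w₁ w₂ w₃ : List G, v = w₁ ++ w₂ ++ w₃ → 1 < w₂.length → ∀ ω, w₂.prod ∉ H ω

/-- The properties of the finite generating set produced by the generating set lemma
(Lemma 5.3 of Antolín–Ciobanu, Lemma 3.3 of the paper). -/
structure GoodGenSet {Ω : Type*} (X : Set G) (H : Ω → Subgroup G) (lam c : ℝ) : Prop where
  finite : X.Finite
  generates : Generates X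
  lam_ge : 1 ≤ lam
  c_ge : 0 ≤ c
  par_gen : ∀ ω : Ω, ∀ h ∈ H ω, ∃ w : List G, IsWord (X ∩ (H ω : Set G)) w ∧ w.prod = h
  isom : ∀ ω : Ω, ∀ h ∈ H ω, wlen (X ∩ (H ω : Set G)) h = wlen X h
  geo_par : ∀ ω : Ω, ∀ u : List G, IsGeodesicWord X u → u.prod ∈ H ω →
    IsWord (X ∩ (H ω : Set G)) u
  derived : ∀ u : List G, IsGeodesicWord X u → ∃ v : List G, IsDerived X H u v ∧
    IsQuasiGeodesicWord (relGen X H) lam c v ∧ NoLongParabolicSubword H v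

/-- The growth function: the number of elements in the ball of radius `r`. -/
noncomputable def growth (X : Set G) (r : ℝ) : ℕ := (ball X r).ncard

/-- The conjugacy growth function: the number of conjugacy classes meeting the ball. -/
noncomputable def conjGrowth (X : Set G) (r : ℝ) : ℕ := (ConjClasses.mk '' ball X r).ncard

/-- The exponential growth rate `h_{G,X}`. -/
noncomputable def growthRate (X : Set G) : ℝ :=
  Filter.limsup (fun n : ℕ => Real.log (growth X n) / n) Filter.atTop

/-- The exponential conjugacy growth rate `k_{G,X}`. -/
noncomputable def conjGrowthRate (X : Set G) : ℝ :=
  Filter.limsup (fun n : ℕ => Real.log (conjGrowth X n) / n) Filter.atTop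

/-- `f ⪯ g`: there is `C > 0` with `f(n) ≤ C·g(C·n) + C` for all `n`. -/
def Preceq (f g : ℕ → ℕ) : Prop := ∃ C : ℕ, 0 < C ∧ ∀ n, f n ≤ C * g (C * n) + C

/-- Asymptotic equivalence of functions. -/
def Asymp (f g : ℕ → ℕ) : Prop := Preceq f g ∧ Preceq g f

/-- A group is finite-by-abelian: it has a finite normal subgroup with abelian
quotient. -/
def FiniteByAbelian (K : Type*) [Group K] : Prop :=
  ∃ N : Subgroup K, N.Normal ∧ Finite N ∧ ∀ a b : K, a * b * a⁻¹ * b⁻¹ ∈ N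


/-! ### Auxiliary lemmas for the main theorem -/

section Aux

variable {X : Set G}

lemma exists_geodesic (hgen : Generates X) (g : G) :
    ∃ w : List G, IsWord X w ∧ w.prod = g ∧ w.length = wlen X g := by
  obtain ⟨w, hw, hp⟩ := hgen g
  have hne : {n | ∃ w : List G, IsWord X w ∧ w.prod = g ∧ w.length = n}.Nonempty :=
    ⟨w.length, w, hw, hp, rfl⟩
  obtain ⟨w', hw', hp', hl'⟩ := Nat.sInf_mem hne
  exact ⟨w', hw', hp', hl'⟩

lemma wlen_le {w : List G} (hw : IsWord X w) : wlen X w.prod ≤ w.length :=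
  Nat.sInf_le ⟨w, hw, rfl, rfl⟩

lemma wlen_one : wlen X (1 : G) = 0 :=
  Nat.le_zero.mp (Nat.sInf_le ⟨[], by intro x hx; simp at hx, by simp, by simp⟩)

noncomputable local instance grpDecEq : DecidableEq G :=
  Classical.decEq _

noncomputable local instance listDecEq : DecidableEq (List G) :=
  Classical.decEq _

/-- A finite set of words over `Y` containing all words of length at most `n`. -/
noncomputable def wordFinset (Y : Finset G) : ℕ → Finset (List G) :=
  fun n => Nat.rec {([] : List G)}
    (fun _ ih => {([] : List G)} ∪ (Y ×ˢ ih).image (fun p => p.1 :: p.2)) n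

lemma mem_wordFinset (Y : Finset G) :
    ∀ (n : ℕ) (w : List G), (∀ x ∈ w, x ∈ Y) → w.length ≤ n → w ∈ wordFinset Y n := by
  intro n
  induction n with
  | zero => intro w _ hl; simp at hl; simp [wordFinset, hl]
  | succ n ih =>
    intro w hw hl
    cases w with
    | nil => simp [wordFinset]
    | cons a t =>
      have : t ∈ wordFinset Y n := ih t (fun x hx => hw x (List.mem_cons_of_mem _ hx))
        (by simp at hl; omega)
      have ha : a ∈ Y := hw a List.mem_cons_self
      simp only [wordFinset]
      refine Finset.mem_union_right _ ?_
      exact Finset.mem_image.mpr ⟨(a, t), Finset.mem_product.mpr ⟨ha, this⟩, rfl⟩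

lemma card_wordFinset (Y : Finset G) : ∀ n : ℕ, (wordFinset Y n).card ≤ (Y.card + 1) ^ n := by
  intro n
  induction n with
  | zero => simp [wordFinset]
  | succ n ih =>
    have h1 : (wordFinset Y (n + 1)).card ≤ 1 + Y.card * (wordFinset Y n).card := by
      calc (wordFinset Y (n + 1)).card
          ≤ ({([] : List G)} : Finset (List G)).card
            + ((Y ×ˢ wordFinset Y n).image (fun p => p.1 :: p.2)).card := by
            simp only [wordFinset]; exact Finset.card_union_le _ _
        _ ≤ 1 + Y.card * (wordFinset Y n).card := by
            have := (Finset.card_image_le (s := Y ×ˢ wordFinset Y n)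
              (f := fun p => p.1 :: p.2)).trans (le_of_eq (Finset.card_product _ _))
            simpa using Nat.add_le_add_left this 1
    have h2 : 1 ≤ (Y.card + 1) ^ n := Nat.one_le_pow _ _ (Nat.succ_pos _)
    calc (wordFinset Y (n + 1)).card ≤ 1 + Y.card * (wordFinset Y n).card := h1
      _ ≤ 1 + Y.card * (Y.card + 1) ^ n :=
          Nat.add_le_add_left (Nat.mul_le_mul_left _ ih) _
      _ ≤ (Y.card + 1) ^ (n + 1) := by rw [pow_succ]; nlinarith [h2]

lemma ball_subset_wordFinset (hfin : X.Finite) (hgen : Generates X) {r : ℝ} {n : ℕ}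
    (h : r ≤ n) : ball X r ⊆ ↑((wordFinset hfin.toFinset n).image List.prod) := by
  intro g hg
  obtain ⟨w, hw, hp, hl⟩ := exists_geodesic hgen g
  have h1 : (wlen X g : ℝ) ≤ (n : ℝ) := le_trans hg h
  have hlen : w.length ≤ n := by rw [hl]; exact_mod_cast h1
  have hmem : w ∈ wordFinset hfin.toFinset n :=
    mem_wordFinset _ n w (fun x hx => hfin.mem_toFinset.mpr (hw x hx)) hlen
  exact Finset.mem_coe.mpr (Finset.mem_image.mpr ⟨w, hmem, hp⟩)

lemma ball_finite (hfin : X.Finite) (hgen : Generates X) (r : ℝ) : (ball X r).Finite :=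
  Set.Finite.subset (Finset.finite_toSet _)
    (ball_subset_wordFinset hfin hgen (Nat.le_ceil r))

lemma growth_le_pow (hfin : X.Finite) (hgen : Generates X) (n : ℕ) :
    growth X n ≤ (hfin.toFinset.card + 1) ^ n := by
  have h1 : growth X n ≤ ((wordFinset hfin.toFinset n).image List.prod).card := by
    rw [growth, ← Set.ncard_coe_finset]
    exact Set.ncard_le_ncard (ball_subset_wordFinset hfin hgen le_rfl)
      (Finset.finite_toSet _)
  exact h1.trans (Finset.card_image_le.trans (card_wordFinset _ n))

lemma one_mem_ball {r : ℝ} (hr : 0 ≤ r) : (1 : G) ∈ ball X r := by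
  simp only [ball, Set.mem_setOf_eq, wlen_one, Nat.cast_zero]; exact hr

lemma growth_pos (hfin : X.Finite) (hgen : Generates X) {r : ℝ} (hr : 0 ≤ r) :
    1 ≤ growth X r := by
  have : (ball X r).Nonempty := ⟨1, one_mem_ball hr⟩
  have := (Set.ncard_pos (ball_finite hfin hgen r)).mpr this
  exact this

lemma conjGrowth_pos (hfin : X.Finite) (hgen : Generates X) {r : ℝ} (hr : 0 ≤ r) :
    1 ≤ conjGrowth X r := by
  have hne : (ConjClasses.mk '' ball X r).Nonempty :=
    ⟨ConjClasses.mk 1, 1, one_mem_ball hr, rfl⟩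
  exact (Set.ncard_pos ((ball_finite hfin hgen r).image _)).mpr hne

lemma conjGrowth_le_growth (hfin : X.Finite) (hgen : Generates X) (r : ℝ) :
    conjGrowth X r ≤ growth X r :=
  Set.ncard_image_le (ball_finite hfin hgen r)

lemma isCyclicPerm_self (u : List G) : IsCyclicPerm u u := ⟨0, by simp⟩

lemma pclpair_exists {u v : List G} (h : IsConj u.prod v.prod) :
    ∃ w : G, IsPCConjugator u v w ∧ wlen X w = PCLpair X u v := by
  obtain ⟨c, hc⟩ := isConj_iff.mp h
  have hc' : c * u.prod = v.prod * c := by rw [← hc]; group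
  have hne : {n | ∃ w : G, IsPCConjugator u v w ∧ wlen X w = n}.Nonempty :=
    ⟨wlen X c, c, ⟨u, v, isCyclicPerm_self u, isCyclicPerm_self v, hc'⟩, rfl⟩
  exact Nat.sInf_mem hne

lemma pclpair_le_PCL (hfin : X.Finite) {u v : List G} {m : ℕ}
    (hu : IsGeodesicWord X u) (hv : IsGeodesicWord X v) (hc : IsConj u.prod v.prod)
    (hl : u.length + v.length ≤ m) : PCLpair X u v ≤ PCL X m := by
  have hfinW : {w : List G | IsWord X w ∧ w.length ≤ m}.Finite := by
    apply Set.Finite.subset (Finset.finite_toSet (wordFinset hfin.toFinset m))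
    intro w hw
    exact mem_wordFinset _ m w (fun x hx => hfin.mem_toFinset.mpr (hw.1 x hx)) hw.2
  have hbdd : BddAbove {k | ∃ u v : List G, IsGeodesicWord X u ∧ IsGeodesicWord X v ∧
      IsConj u.prod v.prod ∧ u.length + v.length ≤ m ∧ PCLpair X u v = k} := by
    apply Set.Finite.bddAbove
    apply Set.Finite.subset (((hfinW.prod hfinW).image
      (fun p => PCLpair X p.1 p.2)))
    rintro k ⟨u', v', hu', hv', _, hl', hk⟩
    exact ⟨(u', v'), ⟨⟨hu'.1, le_trans (Nat.le_add_right _ _) hl'⟩,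
      ⟨hv'.1, le_trans (Nat.le_add_left _ _) hl'⟩⟩, hk⟩
  exact le_csSup hbdd ⟨u, v, hu, hv, hc, hl, rfl⟩

lemma ncard_prod {α β : Type*} {s : Set α} {t : Set β} (hs : s.Finite) (ht : t.Finite) :
    (s ×ˢ t).ncard = s.ncard * t.ncard := by
  rw [Set.ncard_eq_toFinset_card _ (hs.prod ht), ← Set.Finite.toFinset_prod hs ht,
    Finset.card_product, ← Set.ncard_eq_toFinset_card _ hs, ← Set.ncard_eq_toFinset_card _ ht]

lemma count_lemma (hfin : X.Finite) (hgen : Generates X) {n : ℕ} {ε : ℝ}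
    (hpcl : (PCL X (2 * n) : ℝ) < ε * n) :
    growth X n ≤ conjGrowth X n *
      ((n + 1) * (2 * (growth X ((n / 2 : ℕ) : ℝ) * growth X ((⌈ε * n⌉₊ : ℕ) : ℝ)))) := by
  classical
  choose geo hgeoW hgeoP hgeoL using exists_geodesic hgen
  set C : Set (ConjClasses G) := ConjClasses.mk '' ball X (n : ℝ) with hC
  set R : ConjClasses G → G := fun κ => if h : κ ∈ C then h.choose else 1 with hRdef
  have hR : ∀ κ ∈ C, R κ ∈ ball X (n : ℝ) ∧ ConjClasses.mk (R κ) = κ := by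
    intro κ h
    simp only [hRdef, dif_pos h]
    exact ⟨h.choose_spec.1, h.choose_spec.2⟩
  set T : Set (ConjClasses G × ℕ × Bool × G × G) :=
    C ×ˢ (Set.Iic n) ×ˢ (Set.univ : Set Bool) ×ˢ
      (ball X ((n / 2 : ℕ) : ℝ)) ×ˢ (ball X ((⌈ε * n⌉₊ : ℕ) : ℝ)) with hT
  set dec : ConjClasses G × ℕ × Bool × G × G → G := fun p =>
    if p.2.2.1 = true then
      p.2.2.2.1 * p.2.2.2.2⁻¹ *
        ((geo (R p.1)).drop p.2.1 ++ (geo (R p.1)).take p.2.1).prod * p.2.2.2.2 * p.2.2.2.1⁻¹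
    else
      (p.2.2.2.2 * p.2.2.2.1)⁻¹ *
        (((geo (R p.1)).drop p.2.1 ++ (geo (R p.1)).take p.2.1).prod *
          (p.2.2.2.2 * p.2.2.2.1)) with hdec
  have hsub : ball X (n : ℝ) ⊆ dec '' T := by
    intro g hg
    have hgn : wlen X g ≤ n := by
      have h0 : (wlen X g : ℝ) ≤ (n : ℝ) := hg
      exact_mod_cast h0
    have hκ : ConjClasses.mk g ∈ C := ⟨g, hg, rfl⟩
    obtain ⟨hrball, hrmk⟩ := hR _ hκ
    set r : G := R (ConjClasses.mk g) with hr
    have hrn : wlen X r ≤ n := by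
      have h0 : (wlen X r : ℝ) ≤ (n : ℝ) := hrball
      exact_mod_cast h0
    set u : List G := geo g with hu
    set v : List G := geo r with hv
    have hconj : IsConj u.prod v.prod := by
      rw [hgeoP g, hgeoP r]
      exact ConjClasses.mk_eq_mk_iff_isConj.mp hrmk.symm
    have hugeo : IsGeodesicWord X u := ⟨hgeoW g, by rw [hgeoP g]; exact hgeoL g⟩
    have hvgeo : IsGeodesicWord X v := ⟨hgeoW r, by rw [hgeoP r]; exact hgeoL r⟩
    have hul : u.length = wlen X g := hgeoL g
    have hvl : v.length = wlen X r := hgeoL r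
    have hlen : u.length + v.length ≤ 2 * n := by omega
    obtain ⟨w₀, hw₀pc, hw₀len⟩ := pclpair_exists (X := X) hconj
    have hw₀lt : (wlen X w₀ : ℝ) < ε * n := by
      have h' : PCLpair X u v ≤ PCL X (2 * n) := pclpair_le_PCL hfin hugeo hvgeo hconj hlen
      have h'' : (wlen X w₀ : ℝ) ≤ (PCL X (2 * n) : ℝ) := by
        rw [hw₀len]; exact_mod_cast h'
      exact lt_of_le_of_lt h'' hpcl
    have hw₀ball : w₀ ∈ ball X ((⌈ε * n⌉₊ : ℕ) : ℝ) :=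
      le_trans (le_of_lt hw₀lt) (Nat.le_ceil _)
    obtain ⟨u', v', ⟨i, hu'⟩, ⟨j, hv'⟩, hwconj⟩ := hw₀pc
    set i' := min i u.length with hi'
    have hu'' : u' = u.drop i' ++ u.take i' := by
      rcases le_total i u.length with h | h
      · rwa [hi', min_eq_left h]
      · rw [hi', min_eq_right h, List.drop_length, List.take_length, List.nil_append]
        rw [List.drop_of_length_le h, List.take_of_length_le h, List.nil_append] at hu'
        exact hu'
    set j' := min j v.length with hj'
    have hv'' : v' = v.drop j' ++ v.take j' := by
      rcases le_total j v.length with h | h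
      · rwa [hj', min_eq_left h]
      · rw [hj', min_eq_right h, List.drop_length, List.take_length, List.nil_append]
        rw [List.drop_of_length_le h, List.take_of_length_le h, List.nil_append] at hv'
        exact hv'
    have hi'le : i' ≤ u.length := min_le_right _ _
    set t : G := (u.take i').prod with ht
    set d : G := (u.drop i').prod with hd
    have htd : t * d = g := by
      rw [ht, hd, ← List.prod_append, List.take_append_drop, hgeoP g]
    have hu'p : u'.prod = d * t := by rw [hu'', List.prod_append]
    have hwt : wlen X t ≤ i' := by
      have h1 : wlen X t ≤ (u.take i').length :=
        wlen_le (fun x hx => hgeoW g x (List.mem_of_mem_take hx))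
      rwa [List.length_take, min_eq_left hi'le] at h1
    have hwd : wlen X d ≤ u.length - i' := by
      have h1 : wlen X d ≤ (u.drop i').length :=
        wlen_le (fun x hx => hgeoW g x (List.mem_of_mem_drop hx))
      rwa [List.length_drop] at h1
    have hj'n : j' ≤ n := le_trans (min_le_right _ _) (by omega)
    have hkey : v'.prod = w₀ * (d * t) * w₀⁻¹ := by
      rw [← hu'p, hwconj, mul_inv_cancel_right]
    by_cases hhalf : 2 * i' ≤ u.length
    · have hmt : t ∈ ball X ((n / 2 : ℕ) : ℝ) := by
        show (wlen X t : ℝ) ≤ ((n / 2 : ℕ) : ℝ)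
        have : wlen X t ≤ n / 2 := by omega
        exact_mod_cast this
      refine ⟨(ConjClasses.mk g, j', true, t, w₀), ⟨hκ, hj'n, trivial, hmt, hw₀ball⟩, ?_⟩
      show (if (true : Bool) = true then
          t * w₀⁻¹ * (v.drop j' ++ v.take j').prod * w₀ * t⁻¹
        else (w₀ * t)⁻¹ * ((v.drop j' ++ v.take j').prod * (w₀ * t))) = g
      rw [if_pos rfl, ← hv'', hkey, ← htd]
      group
    · have hmd : d ∈ ball X ((n / 2 : ℕ) : ℝ) := by
        show (wlen X d : ℝ) ≤ ((n / 2 : ℕ) : ℝ)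
        have : wlen X d ≤ n / 2 := by omega
        exact_mod_cast this
      refine ⟨(ConjClasses.mk g, j', false, d, w₀), ⟨hκ, hj'n, trivial, hmd, hw₀ball⟩, ?_⟩
      show (if (false : Bool) = true then
          d * w₀⁻¹ * (v.drop j' ++ v.take j').prod * w₀ * d⁻¹
        else (w₀ * d)⁻¹ * ((v.drop j' ++ v.take j').prod * (w₀ * d))) = g
      rw [if_neg (by simp), ← hv'', hkey, ← htd]
      group
  have hbfin : (ball X (n : ℝ)).Finite := ball_finite hfin hgen _
  have hCfin : C.Finite := hbfin.image _
  have hb2 : (ball X ((n / 2 : ℕ) : ℝ)).Finite := ball_finite hfin hgen _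
  have hb3 : (ball X ((⌈ε * n⌉₊ : ℕ) : ℝ)).Finite := ball_finite hfin hgen _
  have hTfin : T.Finite :=
    hCfin.prod ((Set.finite_Iic n).prod (Set.finite_univ.prod (hb2.prod hb3)))
  have h1 : growth X n ≤ T.ncard :=
    le_trans (Set.ncard_le_ncard hsub (hTfin.image dec)) (Set.ncard_image_le hTfin)
  have hIic : (Set.Iic n).ncard = n + 1 := by
    rw [← Finset.coe_Iic, Set.ncard_coe_finset, Nat.card_Iic]
  have hBool : (Set.univ : Set Bool).ncard = 2 := by
    rw [Set.ncard_univ]; simp [Nat.card_eq_fintype_card]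
  have h2 : T.ncard = conjGrowth X n *
      ((n + 1) * (2 * (growth X ((n / 2 : ℕ) : ℝ) * growth X ((⌈ε * n⌉₊ : ℕ) : ℝ)))) := by
    rw [hT, ncard_prod hCfin ((Set.finite_Iic n).prod (Set.finite_univ.prod (hb2.prod hb3))),
      ncard_prod (Set.finite_Iic n) (Set.finite_univ.prod (hb2.prod hb3)),
      ncard_prod Set.finite_univ (hb2.prod hb3), ncard_prod hb2 hb3, hIic, hBool]
    rfl
  rw [h2] at h1
  exact h1

end Aux

/-- If `PCL_{G,X}(n) = o(n)` then `(1/2)·h_{G,X} ≤ k_{G,X} ≤ h_{G,X}`, where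
`h_{G,X}` and `k_{G,X}` are the exponential growth rate and the exponential
conjugacy growth rate. -/
theorem conj_growth_rate_bounds
    (X : Set G) (hfin : X.Finite) (hgen : Generates X)
    (hsub : ∀ ε : ℝ, 0 < ε → ∃ N : ℕ, ∀ n : ℕ, N ≤ n → (PCL X (2 * n) : ℝ) < ε * n) :
    (1 / 2) * growthRate X ≤ conjGrowthRate X ∧ conjGrowthRate X ≤ growthRate X := by
  classical
  set B : ℕ := hfin.toFinset.card + 1 with hB
  have hB1 : (1 : ℝ) ≤ (B : ℝ) := by
    have : 1 ≤ B := Nat.succ_le_succ (Nat.zero_le _)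
    exact_mod_cast this
  set C₀ : ℝ := Real.log B with hC₀
  have hC₀0 : 0 ≤ C₀ := Real.log_nonneg hB1
  set u : ℕ → ℝ := fun n => Real.log (growth X n) / n with hu
  set v : ℕ → ℝ := fun n => Real.log (conjGrowth X n) / n with hv
  have hgr : growthRate X = Filter.limsup u Filter.atTop := rfl
  have hcr : conjGrowthRate X = Filter.limsup v Filter.atTop := rfl
  have hgpos : ∀ n : ℕ, 1 ≤ growth X n := fun n => growth_pos hfin hgen (by positivity)
  have hcpos : ∀ n : ℕ, 1 ≤ conjGrowth X n := fun n => conjGrowth_pos hfin hgen (by positivity)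
  have hu0 : ∀ n, 0 ≤ u n := fun n =>
    div_nonneg (Real.log_nonneg (by exact_mod_cast hgpos n)) (Nat.cast_nonneg n)
  have hv0 : ∀ n, 0 ≤ v n := fun n =>
    div_nonneg (Real.log_nonneg (by exact_mod_cast hcpos n)) (Nat.cast_nonneg n)
  have hlogB : ∀ n : ℕ, Real.log (growth X n) ≤ n * C₀ := by
    intro n
    have h1 : ((growth X n : ℕ) : ℝ) ≤ ((B : ℝ)) ^ n := by
      have := growth_le_pow hfin hgen n
      calc ((growth X n : ℕ) : ℝ) ≤ ((B ^ n : ℕ) : ℝ) := by exact_mod_cast this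
        _ = (B : ℝ) ^ n := by push_cast; ring
    calc Real.log (growth X n) ≤ Real.log ((B : ℝ) ^ n) :=
          Real.log_le_log (by exact_mod_cast hgpos n) h1
      _ = n * Real.log B := by rw [Real.log_pow]
  have huC : ∀ n, u n ≤ C₀ := by
    intro n
    rcases Nat.eq_zero_or_pos n with h | h
    · simp only [hu, h, Nat.cast_zero, div_zero]; exact hC₀0
    · have hn : (0 : ℝ) < n := by exact_mod_cast h
      rw [hu, div_le_iff₀ hn]
      calc Real.log (growth X n) ≤ n * C₀ := hlogB n
        _ = C₀ * n := by ring
  have hvu : ∀ n : ℕ, v n ≤ u n := by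
    intro n
    have hlog : Real.log (conjGrowth X n) ≤ Real.log (growth X n) :=
      Real.log_le_log (by exact_mod_cast hcpos n)
        (by exact_mod_cast conjGrowth_le_growth hfin hgen n)
    rcases Nat.eq_zero_or_pos n with h | h
    · simp [hu, hv, h]
    · have hn : (0 : ℝ) < n := by exact_mod_cast h
      exact (div_le_div_iff_of_pos_right hn).mpr hlog
  have hub : Filter.IsBoundedUnder (· ≤ ·) Filter.atTop u :=
    Filter.isBoundedUnder_of ⟨C₀, huC⟩
  have hvb : Filter.IsBoundedUnder (· ≤ ·) Filter.atTop v :=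
    Filter.isBoundedUnder_of ⟨C₀, fun n => (hvu n).trans (huC n)⟩
  have hucob : Filter.IsCoboundedUnder (· ≤ ·) Filter.atTop u :=
    (Filter.isBoundedUnder_of ⟨0, hu0⟩ :
      Filter.IsBoundedUnder (· ≥ ·) Filter.atTop u).isCoboundedUnder_le
  have hvcob : Filter.IsCoboundedUnder (· ≤ ·) Filter.atTop v :=
    (Filter.isBoundedUnder_of ⟨0, hv0⟩ :
      Filter.IsBoundedUnder (· ≥ ·) Filter.atTop v).isCoboundedUnder_le
  have hk_le_h : conjGrowthRate X ≤ growthRate X := by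
    rw [hgr, hcr]
    exact Filter.limsup_le_limsup (Filter.Eventually.of_forall hvu) hvcob hub
  have hh0 : 0 ≤ growthRate X := by
    rw [hgr]
    exact Filter.le_limsup_of_frequently_le ((Filter.Eventually.of_forall hu0).frequently) hub
  have hhC : growthRate X ≤ C₀ := by
    rw [hgr]
    exact Filter.limsup_le_of_le hucob (Filter.Eventually.of_forall huC)
  have hk0 : 0 ≤ conjGrowthRate X := by
    rw [hcr]
    exact Filter.le_limsup_of_frequently_le ((Filter.Eventually.of_forall hv0).frequently) hvb
  have main : ∀ δ : ℝ, 0 < δ → δ ≤ 1 →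
      growthRate X ≤ conjGrowthRate X + growthRate X / 2 + δ * (C₀ + 6) := by
    intro δ hδ hδ1
    obtain ⟨N, hN⟩ := hsub δ hδ
    set h := growthRate X
    set k := conjGrowthRate X
    -- eventual bound for log growth
    have hev1 : ∀ᶠ m : ℕ in Filter.atTop, u m < h + δ := by
      refine Filter.eventually_lt_of_limsup_lt ?_ hub
      rw [← hgr]; linarith
    have hev1' : ∀ᶠ m : ℕ in Filter.atTop, Real.log (growth X m) ≤ (h + δ) * m := by
      filter_upwards [hev1, Filter.eventually_ge_atTop 1] with m hm hm1
      have hmpos : (0 : ℝ) < m := by exact_mod_cast hm1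
      have := (div_le_iff₀ hmpos).mp (le_of_lt hm)
      linarith
    obtain ⟨N₂, hN₂⟩ := Filter.eventually_atTop.mp hev1'
    have hev2 : ∀ᶠ m : ℕ in Filter.atTop, v m < k + δ := by
      refine Filter.eventually_lt_of_limsup_lt ?_ hvb
      rw [← hcr]; linarith
    have hev2' : ∀ᶠ m : ℕ in Filter.atTop, Real.log (conjGrowth X m) ≤ (k + δ) * m := by
      filter_upwards [hev2, Filter.eventually_ge_atTop 1] with m hm hm1
      have hmpos : (0 : ℝ) < m := by exact_mod_cast hm1
      have := (div_le_iff₀ hmpos).mp (le_of_lt hm)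
      linarith
    -- the logarithmic term
    have hlogo : Filter.Tendsto (fun x : ℝ => Real.log x / x) Filter.atTop (nhds 0) := by
      have h0 := Real.isLittleO_log_id_atTop.tendsto_div_nhds_zero
      simpa [id] using h0
    have htend : Filter.Tendsto (fun m : ℕ => (2 * ((m : ℝ) + 1))) Filter.atTop Filter.atTop :=
      Filter.tendsto_atTop_mono (fun m => by push_cast; linarith [Nat.cast_nonneg (α := ℝ) m])
        tendsto_natCast_atTop_atTop
    have hlog2 : ∀ᶠ m : ℕ in Filter.atTop, Real.log (2 * ((m : ℝ) + 1)) ≤ δ * m := by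
      have h4 : (0 : ℝ) < δ / 4 := by linarith
      have hev := (hlogo.comp htend).eventually (gt_mem_nhds h4)
      filter_upwards [hev, Filter.eventually_ge_atTop 1] with m hm hm1
      have hm1' : (1 : ℝ) ≤ m := by exact_mod_cast hm1
      have hpos : (0 : ℝ) < 2 * ((m : ℝ) + 1) := by linarith
      simp only [Function.comp] at hm
      have h5 := (div_lt_iff₀ hpos).mp hm
      nlinarith
    -- δ·m is eventually large
    have ht5 : Filter.Tendsto (fun m : ℕ => δ * (m : ℝ)) Filter.atTop Filter.atTop :=
      tendsto_natCast_atTop_atTop.const_mul_atTop hδ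
    have hceil : ∀ᶠ m : ℕ in Filter.atTop, N₂ ≤ ⌈δ * (m : ℝ)⌉₊ := by
      filter_upwards [ht5.eventually_ge_atTop (N₂ : ℝ)] with m hm
      have : (N₂ : ℝ) ≤ (⌈δ * (m : ℝ)⌉₊ : ℝ) := le_trans hm (Nat.le_ceil _)
      exact_mod_cast this
    have hhalfc : ∀ᶠ m : ℕ in Filter.atTop, N₂ ≤ m / 2 :=
      Filter.eventually_atTop.mpr ⟨2 * N₂, fun m hm => by omega⟩
    have hlast : ∀ᶠ m : ℕ in Filter.atTop, h + δ ≤ δ * m :=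
      ht5.eventually_ge_atTop (h + δ)
    set A : ℝ := (k + δ) + δ + (h + δ) / 2 + ((h + δ) * δ + δ) with hA
    have hmain : ∀ᶠ m : ℕ in Filter.atTop, u m ≤ A := by
      filter_upwards [Filter.eventually_ge_atTop (max N 1), hev2', hlog2, hceil, hhalfc,
        hlast] with m hm hξ hlg hcl hhf hls
      have hmN : N ≤ m := le_trans (le_max_left _ _) hm
      have hm1 : 1 ≤ m := le_trans (le_max_right _ _) hm
      have hmpos : (0 : ℝ) < m := by exact_mod_cast hm1
      have hcount := count_lemma hfin hgen (n := m) (ε := δ) (hN m hmN)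
      -- cast and take logs
      have p1 : (0 : ℝ) < (conjGrowth X m : ℝ) := by exact_mod_cast hcpos m
      have p2 : (0 : ℝ) < 2 * ((m : ℝ) + 1) := by positivity
      have p3 : (0 : ℝ) < (growth X ((m / 2 : ℕ) : ℝ) : ℝ) := by exact_mod_cast hgpos (m / 2)
      have p4 : (0 : ℝ) < (growth X ((⌈δ * (m : ℝ)⌉₊ : ℕ) : ℝ) : ℝ) := by
        exact_mod_cast hgpos ⌈δ * (m : ℝ)⌉₊
      have p0 : (0 : ℝ) < (growth X m : ℝ) := by exact_mod_cast hgpos m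
      have hcast : (growth X m : ℝ) ≤ (conjGrowth X m : ℝ) * ((2 * ((m : ℝ) + 1)) *
          ((growth X ((m / 2 : ℕ) : ℝ) : ℝ) * (growth X ((⌈δ * (m : ℝ)⌉₊ : ℕ) : ℝ) : ℝ))) := by
        calc (growth X m : ℝ) ≤ ((conjGrowth X m * ((m + 1) * (2 * (growth X ((m / 2 : ℕ) : ℝ) *
              growth X ((⌈δ * (m : ℝ)⌉₊ : ℕ) : ℝ)))) : ℕ) : ℝ) := by exact_mod_cast hcount
          _ = _ := by push_cast; ring
      have hlogsplit : Real.log (growth X m) ≤ Real.log (conjGrowth X m)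
          + Real.log (2 * ((m : ℝ) + 1)) + Real.log (growth X ((m / 2 : ℕ) : ℝ))
          + Real.log (growth X ((⌈δ * (m : ℝ)⌉₊ : ℕ) : ℝ)) := by
        calc Real.log (growth X m) ≤ Real.log ((conjGrowth X m : ℝ) * ((2 * ((m : ℝ) + 1)) *
              ((growth X ((m / 2 : ℕ) : ℝ) : ℝ) * (growth X ((⌈δ * (m : ℝ)⌉₊ : ℕ) : ℝ) : ℝ)))) :=
            Real.log_le_log p0 hcast
          _ = _ := by
            rw [Real.log_mul (ne_of_gt p1) (ne_of_gt (by positivity)),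
              Real.log_mul (ne_of_gt p2) (ne_of_gt (by positivity)),
              Real.log_mul (ne_of_gt p3) (ne_of_gt p4)]
            ring
      -- bound each term
      have b1 : Real.log (conjGrowth X m) ≤ (k + δ) * m := hξ
      have b2 : Real.log (2 * ((m : ℝ) + 1)) ≤ δ * m := hlg
      have b3 : Real.log (growth X ((m / 2 : ℕ) : ℝ)) ≤ (h + δ) * ((m : ℝ) / 2) := by
        have hb := hN₂ (m / 2) hhf
        have hc2 : ((m / 2 : ℕ) : ℝ) ≤ (m : ℝ) / 2 := by
          have := Nat.cast_div_le (m := m) (n := 2) (α := ℝ)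
          simpa using this
        have hpos : (0 : ℝ) ≤ h + δ := by positivity
        calc Real.log (growth X ((m / 2 : ℕ) : ℝ)) ≤ (h + δ) * ((m / 2 : ℕ) : ℝ) := hb
          _ ≤ (h + δ) * ((m : ℝ) / 2) := mul_le_mul_of_nonneg_left hc2 hpos
      have b4 : Real.log (growth X ((⌈δ * (m : ℝ)⌉₊ : ℕ) : ℝ)) ≤ (h + δ) * (δ * m + 1) := by
        have hb := hN₂ ⌈δ * (m : ℝ)⌉₊ hcl
        have hc2 : ((⌈δ * (m : ℝ)⌉₊ : ℕ) : ℝ) ≤ δ * m + 1 :=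
          le_of_lt (Nat.ceil_lt_add_one (by positivity))
        have hpos : (0 : ℝ) ≤ h + δ := by positivity
        calc Real.log (growth X ((⌈δ * (m : ℝ)⌉₊ : ℕ) : ℝ)) ≤ (h + δ) * ((⌈δ * (m : ℝ)⌉₊ : ℕ) : ℝ) := hb
          _ ≤ (h + δ) * (δ * m + 1) := mul_le_mul_of_nonneg_left hc2 hpos
      have hsum : Real.log (growth X m) ≤ A * m := by
        have hpos : (0 : ℝ) ≤ h + δ := by positivity
        rw [hA]
        linarith [hlogsplit, b1, b2, b3, b4, hls]
      rw [hu]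
      rw [div_le_iff₀ hmpos]
      linarith [hsum]
    have hlim : h ≤ A := by
      rw [hgr]
      exact Filter.limsup_le_of_le hucob hmain
    rw [hA] at hlim
    have hx : (h + δ) * δ ≤ (C₀ + 1) * δ :=
      mul_le_mul_of_nonneg_right (by linarith) hδ.le
    linarith [hlim, hx, hδ.le, hδ1, hδ]
  have hhalf : (1 / 2) * growthRate X ≤ conjGrowthRate X := by
    have hC6 : (0 : ℝ) < C₀ + 6 := by linarith
    have key : ∀ t : ℝ, 0 < t → (1 / 2) * growthRate X ≤ conjGrowthRate X + t := by
      intro t ht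
      set δ := min 1 (t / (C₀ + 6)) with hδdef
      have hδpos : 0 < δ := lt_min one_pos (div_pos ht hC6)
      have hδ1 : δ ≤ 1 := min_le_left _ _
      have hm := main δ hδpos hδ1
      have hδt : δ * (C₀ + 6) ≤ t := by
        calc δ * (C₀ + 6) ≤ (t / (C₀ + 6)) * (C₀ + 6) := by
              have := min_le_right 1 (t / (C₀ + 6))
              nlinarith
          _ = t := div_mul_cancel₀ t (ne_of_gt hC6)
      linarith
    exact le_of_forall_pos_le_add key
  exact ⟨hhalf, hk_le_h⟩


end PCLPaper
end

section
/- Suppose X and Y are finite generating sets for a group G. For each λ ≥ 1 and c ≥ 0 there exist λ' ≥ λ, c' ≥ c and K > 0 such that PCL_{G,X,λ,c}(n) ≤ K² + K · PCL_{G,Y,λ',c'}(Kn) for all n ∈ ℕ. -/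
/- Common definitions: words over a generating set, word length, geodesic and
quasi-geodesic words, cyclic permutations, PC-conjugators, the (permutation)
conjugacy length functions, hyperbolic Cayley graphs, and relative hyperbolicity. -/

namespace PCLPaper

variable {G : Type*} [Group G]

/-- The permutation conjugacy length function for `(λ,c)`-quasi-geodesic words. -/
noncomputable def PCLq (X : Set G) (lam c : ℝ) (n : ℕ) : ℕ :=
  sSup {k | ∃ u v : List G, IsQuasiGeodesicWord X lam c u ∧
    IsQuasiGeodesicWord X lam c v ∧ IsConj u.prod v.prod ∧
    u.length + v.length ≤ n ∧ PCLpair X u v = k}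


section Auxiliary

set_option linter.unusedSectionVars false



lemma exists_geodesicWord {X : Set G} (hX : Generates X) (g : G) :
    ∃ w : List G, IsWord X w ∧ w.prod = g ∧ w.length = wlen X g := by
  obtain ⟨w, hw, hp⟩ := hX g
  exact Nat.sInf_mem (⟨w.length, w, hw, hp, rfl⟩ : {n | ∃ w : List G, IsWord X w ∧ w.prod = g ∧ w.length = n}.Nonempty)

lemma wlen_le_length {X : Set G} {w : List G} (h : IsWord X w) : wlen X w.prod ≤ w.length :=
  Nat.sInf_le ⟨w, h, rfl, rfl⟩

lemma wlen_mul_le {X : Set G} (hX : Generates X) (g h : G) :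
    wlen X (g * h) ≤ wlen X g + wlen X h := by
  obtain ⟨wg, h1, h2, h3⟩ := exists_geodesicWord hX g
  obtain ⟨wh, k1, k2, k3⟩ := exists_geodesicWord hX h
  have hw : IsWord X (wg ++ wh) := by
    intro x hx; rcases List.mem_append.1 hx with h | h
    exacts [h1 x h, k1 x h]
  have := wlen_le_length hw
  simpa [h2, k2, ← h3, ← k3] using this

lemma wlen_prod_le_sum {X : Set G} (hX : Generates X) (w : List G) :
    wlen X w.prod ≤ (w.map (wlen X)).sum := by
  induction w with
  | nil => simpa using wlen_le_length (X := X) (w := []) (by intro x hx; simp at hx)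
  | cons x t ih =>
    calc wlen X (x :: t).prod ≤ wlen X x + wlen X t.prod := by
          simpa using wlen_mul_le hX x t.prod
      _ ≤ wlen X x + (t.map (wlen X)).sum := Nat.add_le_add_left ih _
      _ = _ := by simp

lemma wlen_le_mul {X Y : Set G} (hXg : Generates X) (hYg : Generates Y) {M' : ℕ}
    (hM : ∀ y ∈ Y, wlen X y ≤ M') (g : G) : wlen X g ≤ M' * wlen Y g := by
  obtain ⟨w, h1, h2, h3⟩ := exists_geodesicWord hYg g
  calc wlen X g = wlen X w.prod := by rw [h2]
    _ ≤ (w.map (wlen X)).sum := wlen_prod_le_sum hXg w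
    _ ≤ (w.map (wlen X)).length • M' := List.sum_le_card_nsmul _ _ (by
        intro x hx; obtain ⟨y, hy, rfl⟩ := List.mem_map.1 hx; exact hM y (h1 y hy))
    _ = M' * wlen Y g := by simp [← h3, Nat.mul_comm]



def bar (rep : G → List G) (u : List G) : List G := (u.map rep).flatten

noncomputable def sfun (rep : G → List G) (u : List G) (a : ℕ) : ℕ :=
  (bar rep (u.take a)).length

lemma bar_append (rep : G → List G) (u v : List G) :
    bar rep (u ++ v) = bar rep u ++ bar rep v := by simp [bar]

lemma bar_prod {rep : G → List G} (hrep : ∀ g, (rep g).prod = g) (u : List G) :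
    (bar rep u).prod = u.prod := by
  simp [bar, List.prod_flatten, List.map_map, Function.comp_def, hrep]

lemma bar_length_le {rep : G → List G} {M : ℕ} {u : List G}
    (h : ∀ x ∈ u, (rep x).length ≤ M) : (bar rep u).length ≤ M * u.length := by
  induction u with
  | nil => simp [bar]
  | cons x t ih =>
    have : bar rep (x :: t) = rep x ++ bar rep t := rfl
    rw [this, List.length_append]
    have h1 : (rep x).length ≤ M := h x List.mem_cons_self
    have h2 : (bar rep t).length ≤ M * t.length := ih (fun y hy => h y (List.mem_cons_of_mem _ hy))
    calc (rep x).length + (bar rep t).length ≤ M + M * t.length := Nat.add_le_add h1 h2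
      _ = M * (x :: t).length := by simp [List.length_cons]; ring

lemma sfun_zero (rep : G → List G) (u : List G) : sfun rep u 0 = 0 := by simp [sfun, bar]

lemma sfun_length (rep : G → List G) (u : List G) :
    sfun rep u u.length = (bar rep u).length := by simp [sfun]

lemma take_bar (rep : G → List G) (u : List G) (a : ℕ) :
    (bar rep u).take (sfun rep u a) = bar rep (u.take a) := by
  have h : bar rep u = bar rep (u.take a) ++ bar rep (u.drop a) := by
    rw [← bar_append, List.take_append_drop]
  rw [h]
  simp only [sfun]
  exact List.take_left

lemma sfun_add_decomp {rep : G → List G} (u : List G) {a b : ℕ} (hab : a ≤ b) :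
    sfun rep u b = sfun rep u a + (bar rep ((u.drop a).take (b - a))).length := by
  have h : u.take b = u.take a ++ (u.drop a).take (b - a) := by
    rw [← List.take_add, Nat.add_sub_cancel' hab]
  rw [sfun, h, bar_append, List.length_append, sfun]

lemma sfun_mono (rep : G → List G) (u : List G) {a b : ℕ} (hab : a ≤ b) :
    sfun rep u a ≤ sfun rep u b := by
  rw [sfun_add_decomp u hab]; exact Nat.le_add_right _ _

lemma sfun_step {rep : G → List G} {M : ℕ} {u : List G}
    (h : ∀ x ∈ u, (rep x).length ≤ M) {a b : ℕ} (hab : a ≤ b) :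
    sfun rep u b ≤ sfun rep u a + M * (b - a) := by
  rw [sfun_add_decomp u hab]
  have h1 : (bar rep ((u.drop a).take (b - a))).length ≤ M * ((u.drop a).take (b - a)).length :=
    bar_length_le (fun x hx => h x (List.mem_of_mem_drop (List.mem_of_mem_take hx)))
  have h2 : ((u.drop a).take (b - a)).length ≤ b - a := by
    simp [List.length_take]
  exact Nat.add_le_add_left (h1.trans (Nat.mul_le_mul_left M h2)) _

lemma roundDown {rep : G → List G} {M : ℕ} {u : List G}
    (hM : ∀ x ∈ u, (rep x).length ≤ M) {i : ℕ} (hi : i ≤ (bar rep u).length) :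
    ∃ a, a ≤ u.length ∧ sfun rep u a ≤ i ∧ i ≤ sfun rep u a + M := by
  classical
  set P : ℕ → Prop := fun a => sfun rep u a ≤ i with hP
  have h0 : P 0 := by simp only [P, sfun_zero]; exact Nat.zero_le _
  set a := Nat.findGreatest P u.length with ha
  have hale : a ≤ u.length := Nat.findGreatest_le u.length
  have hspec : P a := Nat.findGreatest_spec (Nat.zero_le _) h0
  refine ⟨a, hale, hspec, ?_⟩
  rcases eq_or_lt_of_le hale with he | hlt
  · rw [he, sfun_length]; omega
  · have hng : ¬ P (a + 1) :=
      Nat.findGreatest_is_greatest (P := P) (n := u.length) (k := a + 1) (by omega) (by omega)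
    have hlti : i < sfun rep u (a + 1) := by
      simp only [P] at hng; omega
    have hstep : sfun rep u (a + 1) ≤ sfun rep u a + M := by
      have h2 := sfun_step hM (Nat.le_succ a)
      simpa using h2
    have := hspec
    simp only [P] at this
    omega

lemma roundUp {rep : G → List G} {M : ℕ} {u : List G}
    (hM : ∀ x ∈ u, (rep x).length ≤ M) {i : ℕ} (hi : i ≤ (bar rep u).length) :
    ∃ b, b ≤ u.length ∧ i ≤ sfun rep u b ∧ sfun rep u b ≤ i + M := by
  classical
  have hex : ∃ b, i ≤ sfun rep u b := ⟨u.length, by rw [sfun_length]; exact hi⟩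
  refine ⟨Nat.find hex, Nat.find_min' hex (by rw [sfun_length]; exact hi),
    Nat.find_spec hex, ?_⟩
  rcases Nat.eq_zero_or_pos (Nat.find hex) with h0 | hpos
  · rw [h0, sfun_zero]; exact Nat.zero_le _
  · have hlt := Nat.find_min hex (Nat.sub_lt hpos Nat.one_pos)
    push_neg at hlt
    have hstep : sfun rep u (Nat.find hex) ≤ sfun rep u (Nat.find hex - 1) + M := by
      have := sfun_step hM (Nat.sub_le (Nat.find hex) 1)
      calc sfun rep u (Nat.find hex)
          ≤ sfun rep u (Nat.find hex - 1) + M * (Nat.find hex - (Nat.find hex - 1)) := this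
        _ ≤ sfun rep u (Nat.find hex - 1) + M * 1 := by
            exact Nat.add_le_add_left (Nat.mul_le_mul_left M (by omega)) _
        _ = sfun rep u (Nat.find hex - 1) + M := by ring
    omega

lemma take_prod_decomp (l : List G) {p q : ℕ} (h : p ≤ q) :
    ∃ m : List G, m.length ≤ q - p ∧ (∀ x ∈ m, x ∈ l) ∧
      (l.take p).prod * m.prod = (l.take q).prod := by
  refine ⟨(l.drop p).take (q - p), by simp [List.length_take], ?_, ?_⟩
  · intro x hx; exact List.mem_of_mem_drop (List.mem_of_mem_take hx)
  · rw [← List.prod_append, ← List.take_add, Nat.add_sub_cancel' h]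

lemma cyclic_prod (l : List G) (i : ℕ) :
    (l.drop i ++ l.take i).prod = ((l.take i).prod)⁻¹ * l.prod * (l.take i).prod := by
  have h : (l.take i).prod * (l.drop i).prod = l.prod := by
    rw [← List.prod_append, List.take_append_drop]
  rw [List.prod_append, ← h]; group

lemma cyclic_norm (l : List G) (i : ℕ) :
    ∃ i', i' ≤ l.length ∧ l.drop i ++ l.take i = l.drop i' ++ l.take i' := by
  rcases le_total i l.length with h | h
  · exact ⟨i, h, rfl⟩
  · exact ⟨l.length, le_rfl, by
      rw [List.take_of_length_le h, List.drop_eq_nil_of_le h, List.take_length, List.drop_length]⟩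

lemma bar_isWord {rep : G → List G} {Y : Set G} (hrepW : ∀ g, IsWord Y (rep g)) (u : List G) :
    IsWord Y (bar rep u) := by
  intro x hx
  rw [bar, List.mem_flatten] at hx
  obtain ⟨l, hl, hxl⟩ := hx
  obtain ⟨z, _, rfl⟩ := List.mem_map.1 hl
  exact hrepW z x hxl

lemma bar_qg {X Y : Set G} (hXg : Generates X) (hYg : Generates Y)
    {rep : G → List G} (hrepW : ∀ g, IsWord Y (rep g)) (hrepP : ∀ g, (rep g).prod = g)
    {M M' : ℕ} (hM' : ∀ y ∈ Y, wlen X y ≤ M')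
    {lam c : ℝ} (hlam : 1 ≤ lam) (hc : 0 ≤ c)
    {u : List G} (hu : IsQuasiGeodesicWord X lam c u)
    (hM : ∀ x ∈ u, (rep x).length ≤ M) :
    IsQuasiGeodesicWord Y ((M : ℝ) * M' * lam) ((M : ℝ) * c + 2 * (M : ℝ)^2 * M' * lam)
      (bar rep u) := by
  have hlam0 : (0:ℝ) ≤ lam := le_trans zero_le_one hlam
  have hM0 : (0:ℝ) ≤ (M:ℝ) := Nat.cast_nonneg M
  have hM'0 : (0:ℝ) ≤ (M':ℝ) := Nat.cast_nonneg M'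
  refine ⟨bar_isWord hrepW u, ?_⟩
  intro i j hij hj
  have hi : i ≤ (bar rep u).length := hij.trans hj
  obtain ⟨a, hau, hai, haiM⟩ := roundDown hM hi
  obtain ⟨b, hbu, hjb, hbM⟩ := roundUp hM hj
  set qi := ((bar rep u).take i).prod with hqi
  set qj := ((bar rep u).take j).prod with hqj
  set d : ℕ := wdist Y qi qj with hd
  have hd0 : (0:ℝ) ≤ (d:ℝ) := Nat.cast_nonneg d
  rcases le_or_gt a b with hab | hba
  · -- main case
    obtain ⟨m1, hm1len, hm1mem, hm1⟩ := take_prod_decomp (bar rep u) hai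
    obtain ⟨m2, hm2len, hm2mem, hm2⟩ := take_prod_decomp (bar rep u) hjb
    have hUa : ((bar rep u).take (sfun rep u a)).prod = (u.take a).prod := by
      rw [take_bar, bar_prod hrepP]
    have hUb : ((bar rep u).take (sfun rep u b)).prod = (u.take b).prod := by
      rw [take_bar, bar_prod hrepP]
    rw [hUa] at hm1
    rw [hUb] at hm2
    rw [← hqi] at hm1
    rw [← hqj] at hm2
    have hYw : IsWord Y (bar rep u) := bar_isWord hrepW u
    have hw1 : wlen Y ((u.take a).prod⁻¹ * qi) ≤ M := by
      have he : (u.take a).prod⁻¹ * qi = m1.prod := by rw [← hm1]; group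
      rw [he]
      exact (wlen_le_length (fun x hx => hYw x (hm1mem x hx))).trans (by omega)
    have hw2 : wlen Y (qj⁻¹ * (u.take b).prod) ≤ M := by
      have he : qj⁻¹ * (u.take b).prod = m2.prod := by rw [← hm2]; group
      rw [he]
      exact (wlen_le_length (fun x hx => hYw x (hm2mem x hx))).trans (by omega)
    have htri : wdist Y (u.take a).prod (u.take b).prod ≤ M + (d + M) := by
      have he : (u.take a).prod⁻¹ * (u.take b).prod =
          ((u.take a).prod⁻¹ * qi) * ((qi⁻¹ * qj) * (qj⁻¹ * (u.take b).prod)) := by group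
      rw [wdist, he]
      refine (wlen_mul_le hYg _ _).trans (Nat.add_le_add hw1 ?_)
      exact (wlen_mul_le hYg _ _).trans (Nat.add_le_add (le_refl _) hw2)
    have hdX : wdist X (u.take a).prod (u.take b).prod ≤ M' * (M + (d + M)) := by
      refine (wlen_le_mul hXg hYg hM' _).trans ?_
      exact Nat.mul_le_mul_left M' htri
    have hQG := hu.2 a b hab hbu
    have hstep := sfun_step hM hab
    have hC : (sfun rep u b : ℝ) ≤ (sfun rep u a : ℝ) + (M:ℝ) * ((b:ℝ) - (a:ℝ)) := by
      have hcast := (Nat.cast_le (α := ℝ)).2 hstep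
      push_cast [Nat.cast_sub hab] at hcast
      linarith
    have hE : (wdist X (u.take a).prod (u.take b).prod : ℝ) ≤ (M':ℝ) * (2*(M:ℝ) + (d:ℝ)) := by
      have hcast := (Nat.cast_le (α := ℝ)).2 hdX
      push_cast at hcast
      linarith
    have hA : (j:ℝ) ≤ (sfun rep u b : ℝ) := (Nat.cast_le (α := ℝ)).2 hjb
    have hB : (sfun rep u a : ℝ) ≤ (i:ℝ) := (Nat.cast_le (α := ℝ)).2 hai
    calc (j:ℝ) - (i:ℝ) ≤ (sfun rep u b : ℝ) - (sfun rep u a : ℝ) := by linarith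
      _ ≤ (M:ℝ) * ((b:ℝ) - (a:ℝ)) := by linarith
      _ ≤ (M:ℝ) * (lam * (wdist X (u.take a).prod (u.take b).prod : ℝ) + c) :=
          mul_le_mul_of_nonneg_left hQG hM0
      _ ≤ (M:ℝ) * (lam * ((M':ℝ) * (2*(M:ℝ) + (d:ℝ))) + c) := by
          refine mul_le_mul_of_nonneg_left ?_ hM0
          have := mul_le_mul_of_nonneg_left hE hlam0
          linarith
      _ = (M:ℝ) * M' * lam * (d:ℝ) + ((M:ℝ) * c + 2 * (M:ℝ)^2 * M' * lam) := by ring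
  · -- degenerate case
    have hmono := sfun_mono rep u hba.le
    have hji : j ≤ i := le_trans hjb (le_trans hmono hai)
    have h1 : (0:ℝ) ≤ (M:ℝ) * M' * lam * (d:ℝ) :=
      mul_nonneg (mul_nonneg (mul_nonneg hM0 hM'0) hlam0) hd0
    have h2 : (0:ℝ) ≤ (M:ℝ) * c := mul_nonneg hM0 hc
    have h3 : (0:ℝ) ≤ 2 * (M:ℝ)^2 * M' * lam := by
      have h4 : (0:ℝ) ≤ (M:ℝ)^2 * M' * lam :=
        mul_nonneg (mul_nonneg (sq_nonneg _) hM'0) hlam0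
      linarith
    have hji' : (j:ℝ) ≤ (i:ℝ) := (Nat.cast_le (α := ℝ)).2 hji
    linarith
lemma finite_boundedWords {Y : Set G} (hY : Y.Finite) (N : ℕ) :
    {w : List G | IsWord Y w ∧ w.length ≤ N}.Finite := by
  have : Finite ↥Y := hY.to_subtype
  have hsub : {w : List G | IsWord Y w ∧ w.length ≤ N} ⊆
      (fun l : List ↥Y => l.map Subtype.val) '' {l : List ↥Y | l.length ≤ N} := by
    rintro w ⟨hw, hlen⟩
    refine ⟨w.attach.map (fun x => (⟨x.1, hw x.1 x.2⟩ : ↥Y)), by simpa using hlen, ?_⟩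
    simp [List.map_map]
  exact ((List.finite_length_le ↥Y N).image _).subset hsub

lemma bddAbove_pclq (Y : Set G) (hYf : Y.Finite) (lam c : ℝ) (N : ℕ) :
    BddAbove {k | ∃ u v : List G, IsQuasiGeodesicWord Y lam c u ∧
      IsQuasiGeodesicWord Y lam c v ∧ IsConj u.prod v.prod ∧
      u.length + v.length ≤ N ∧ PCLpair Y u v = k} := by
  apply Set.Finite.bddAbove
  have hfin := (finite_boundedWords hYf N).prod (finite_boundedWords hYf N)
  apply (hfin.image (fun p : List G × List G => PCLpair Y p.1 p.2)).subset
  rintro k ⟨u, v, hu, hv, -, hl, rfl⟩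
  exact ⟨(u, v), ⟨⟨hu.1, le_trans (Nat.le_add_right _ _) hl⟩,
    ⟨hv.1, le_trans (Nat.le_add_left _ _) hl⟩⟩, rfl⟩

end Auxiliary

/-- **Lemma (change of generating set).** If `X` and `Y` are finite generating sets
of `G`, then for every `λ ≥ 1` and `c ≥ 0` there are `λ' ≥ λ`, `c' ≥ c` and `K > 0`
with `PCL_{G,X,λ,c}(n) ≤ K² + K · PCL_{G,Y,λ',c'}(K·n)` for all `n`. -/
theorem pclq_change_gen_set
    (X Y : Set G) (hXf : X.Finite) (hXg : Generates X)
    (hYf : Y.Finite) (hYg : Generates Y)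
    (lam c : ℝ) (hlam : 1 ≤ lam) (hc : 0 ≤ c) :
    ∃ lam' c' : ℝ, lam ≤ lam' ∧ c ≤ c' ∧ ∃ K : ℕ, 0 < K ∧
      ∀ n : ℕ, PCLq X lam c n ≤ K ^ 2 + K * PCLq Y lam' c' (K * n) := by
  classical
  have hlam0 : (0:ℝ) ≤ lam := le_trans zero_le_one hlam
  choose rep hrepW hrepP hrepL using fun g => exists_geodesicWord hYg g
  set M : ℕ := hXf.toFinset.sup (fun x => wlen Y x) + 1 with hMdef
  set M' : ℕ := hYf.toFinset.sup (fun y => wlen X y) + 1 with hM'def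
  have hMrep : ∀ x ∈ X, (rep x).length ≤ M := by
    intro x hx
    rw [hrepL]
    exact le_trans (Finset.le_sup (f := fun x => wlen Y x) (hXf.mem_toFinset.2 hx))
      (Nat.le_succ _)
  have hM' : ∀ y ∈ Y, wlen X y ≤ M' := fun y hy =>
    le_trans (Finset.le_sup (f := fun y => wlen X y) (hYf.mem_toFinset.2 hy)) (Nat.le_succ _)
  have hM1 : 1 ≤ M := Nat.succ_le_succ (Nat.zero_le _)
  have hM'1 : 1 ≤ M' := Nat.succ_le_succ (Nat.zero_le _)
  have hM1R : (1:ℝ) ≤ (M:ℝ) := by exact_mod_cast hM1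
  have hM'1R : (1:ℝ) ≤ (M':ℝ) := by exact_mod_cast hM'1
  refine ⟨(M:ℝ) * M' * lam, (M:ℝ) * c + 2 * (M:ℝ)^2 * M' * lam, ?_, ?_, 2 * M * M', ?_, ?_⟩
  · -- lam ≤ lam'
    have hMM' : (1:ℝ) ≤ (M:ℝ) * (M':ℝ) := by nlinarith
    calc lam = 1 * lam := (one_mul lam).symm
      _ ≤ (M:ℝ) * M' * lam := mul_le_mul_of_nonneg_right hMM' hlam0
  · -- c ≤ c'
    have h1 : c ≤ (M:ℝ) * c := by nlinarith
    have h2 : (0:ℝ) ≤ 2 * (M:ℝ)^2 * M' * lam := by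
      have h3 : (0:ℝ) ≤ (M:ℝ)^2 * M' * lam :=
        mul_nonneg (mul_nonneg (sq_nonneg _) (le_trans zero_le_one hM'1R)) hlam0
      linarith
    linarith
  · exact Nat.mul_pos (Nat.mul_pos two_pos hM1) hM'1
  · intro n
    refine csSup_le' ?_
    rintro k ⟨u, v, hu, hv, hconj, hlen, rfl⟩
    have hMu : ∀ x ∈ u, (rep x).length ≤ M := fun x hx => hMrep x (hu.1 x hx)
    have hMv : ∀ x ∈ v, (rep x).length ≤ M := fun x hx => hMrep x (hv.1 x hx)
    have hqu := bar_qg hXg hYg hrepW hrepP hM' hlam hc hu hMu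
    have hqv := bar_qg hXg hYg hrepW hrepP hM' hlam hc hv hMv
    have hpu : (bar rep u).prod = u.prod := bar_prod hrepP u
    have hpv : (bar rep v).prod = v.prod := bar_prod hrepP v
    have hYu : IsWord Y (bar rep u) := bar_isWord hrepW u
    have hYv : IsWord Y (bar rep v) := bar_isWord hrepW v
    -- length bound
    have hlen' : (bar rep u).length + (bar rep v).length ≤ 2 * M * M' * n := by
      have hlu : (bar rep u).length ≤ M * u.length := bar_length_le hMu
      have hlv : (bar rep v).length ≤ M * v.length := bar_length_le hMv
      have hMle : M ≤ 2 * M * M' := by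
        calc M = M * 1 := (Nat.mul_one M).symm
          _ ≤ M * (2 * M') := Nat.mul_le_mul_left M (by omega)
          _ = 2 * M * M' := by ring
      calc (bar rep u).length + (bar rep v).length ≤ M * u.length + M * v.length :=
            Nat.add_le_add hlu hlv
        _ = M * (u.length + v.length) := by ring
        _ ≤ M * n := Nat.mul_le_mul_left M hlen
        _ ≤ 2 * M * M' * n := Nat.mul_le_mul_right n hMle
    have hconj' : IsConj (bar rep u).prod (bar rep v).prod := by
      rw [hpu, hpv]; exact hconj
    -- a PC-conjugator of minimal Y-length for the bars
    obtain ⟨g0, hg0⟩ := isConj_iff.1 hconj'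
    have hPC0 : IsPCConjugator (bar rep u) (bar rep v) g0 := by
      refine ⟨bar rep u, bar rep v, ⟨0, by simp⟩, ⟨0, by simp⟩, ?_⟩
      rw [← hg0]; group
    have hne : {m | ∃ w : G, IsPCConjugator (bar rep u) (bar rep v) w ∧ wlen Y w = m}.Nonempty :=
      ⟨wlen Y g0, g0, hPC0, rfl⟩
    obtain ⟨w, hwPC, hwlen⟩ := Nat.sInf_mem hne
    have hwlen' : wlen Y w = PCLpair Y (bar rep u) (bar rep v) := hwlen
    -- membership in the PCLq Y set
    have hQle : PCLpair Y (bar rep u) (bar rep v) ≤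
        PCLq Y ((M:ℝ) * M' * lam) ((M:ℝ) * c + 2 * (M:ℝ)^2 * M' * lam) (2 * M * M' * n) :=
      le_csSup (bddAbove_pclq Y hYf _ _ _)
        ⟨bar rep u, bar rep v, hqu, hqv, hconj', hlen', rfl⟩
    -- transfer the conjugator back
    obtain ⟨u', v', ⟨i0, hi0⟩, ⟨k0, hk0⟩, heq⟩ := hwPC
    obtain ⟨i, hiL, hieq⟩ := cyclic_norm (bar rep u) i0
    obtain ⟨kk, hkL, hkeq⟩ := cyclic_norm (bar rep v) k0
    rw [hi0, hieq] at heq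
    rw [hk0, hkeq] at heq
    rw [cyclic_prod, cyclic_prod, hpu, hpv] at heq
    obtain ⟨b, hbu, hib, hbM⟩ := roundUp hMu hiL
    obtain ⟨a, hav, hak, haM⟩ := roundDown hMv hkL
    obtain ⟨mu, hmulen, humem, hmu⟩ := take_prod_decomp (bar rep u) hib
    obtain ⟨mv, hmvlen, hvmem, hmv⟩ := take_prod_decomp (bar rep v) hak
    rw [take_bar, bar_prod hrepP] at hmu
    rw [take_bar, bar_prod hrepP] at hmv
    have hqi' : ((bar rep u).take i).prod = (u.take b).prod * mu.prod⁻¹ := by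
      rw [← hmu]; group
    have hqk' : ((bar rep v).take kk).prod = (v.take a).prod * mv.prod := hmv.symm
    rw [hqi', hqk'] at heq
    have heq2 : (mv.prod * w * mu.prod) * (u.drop b ++ u.take b).prod =
        (v.drop a ++ v.take a).prod * (mv.prod * w * mu.prod) := by
      rw [cyclic_prod, cyclic_prod]
      calc (mv.prod * w * mu.prod) * ((u.take b).prod⁻¹ * u.prod * (u.take b).prod)
          = mv.prod * (w * (((u.take b).prod * mu.prod⁻¹)⁻¹ * u.prod *
              ((u.take b).prod * mu.prod⁻¹))) * mu.prod := by group
        _ = mv.prod * ((((v.take a).prod * mv.prod)⁻¹ * v.prod *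
              ((v.take a).prod * mv.prod)) * w) * mu.prod := by rw [heq]
        _ = ((v.take a).prod⁻¹ * v.prod * (v.take a).prod) *
              (mv.prod * w * mu.prod) := by group
    have hPCw0 : IsPCConjugator u v (mv.prod * w * mu.prod) :=
      ⟨u.drop b ++ u.take b, v.drop a ++ v.take a, ⟨b, rfl⟩, ⟨a, rfl⟩, heq2⟩
    have hkle : PCLpair X u v ≤ wlen X (mv.prod * w * mu.prod) :=
      Nat.sInf_le ⟨mv.prod * w * mu.prod, hPCw0, rfl⟩
    -- estimate the X-length of the new conjugator
    have hwmu : wlen X mu.prod ≤ M' * M := by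
      calc wlen X mu.prod ≤ M' * wlen Y mu.prod := wlen_le_mul hXg hYg hM' _
        _ ≤ M' * M := Nat.mul_le_mul_left M'
            ((wlen_le_length (fun x hx => hYu x (humem x hx))).trans (by omega))
    have hwmv : wlen X mv.prod ≤ M' * M := by
      calc wlen X mv.prod ≤ M' * wlen Y mv.prod := wlen_le_mul hXg hYg hM' _
        _ ≤ M' * M := Nat.mul_le_mul_left M'
            ((wlen_le_length (fun x hx => hYv x (hvmem x hx))).trans (by omega))
    have hww : wlen X w ≤ M' * PCLpair Y (bar rep u) (bar rep v) := by
      rw [← hwlen']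
      exact wlen_le_mul hXg hYg hM' w
    have h1 : wlen X (mv.prod * w * mu.prod) ≤
        M' * PCLpair Y (bar rep u) (bar rep v) + 2 * M * M' := by
      calc wlen X (mv.prod * w * mu.prod)
          ≤ wlen X (mv.prod * w) + wlen X mu.prod := wlen_mul_le hXg _ _
        _ ≤ (wlen X mv.prod + wlen X w) + wlen X mu.prod :=
            Nat.add_le_add_right (wlen_mul_le hXg _ _) _
        _ ≤ (M' * M + M' * PCLpair Y (bar rep u) (bar rep v)) + M' * M :=
            Nat.add_le_add (Nat.add_le_add hwmv hww) hwmu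
        _ = M' * PCLpair Y (bar rep u) (bar rep v) + 2 * M * M' := by ring
    -- final arithmetic
    have hMK : M' ≤ 2 * M * M' := by
      calc M' = 1 * M' := (Nat.one_mul M').symm
        _ ≤ (2 * M) * M' := Nat.mul_le_mul_right M' (by omega)
    have hKK : 2 * M * M' ≤ (2 * M * M') ^ 2 := Nat.le_self_pow (by norm_num) _
    calc PCLpair X u v ≤ wlen X (mv.prod * w * mu.prod) := hkle
      _ ≤ M' * PCLpair Y (bar rep u) (bar rep v) + 2 * M * M' := h1
      _ ≤ (2 * M * M') * PCLq Y ((M:ℝ) * M' * lam)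
            ((M:ℝ) * c + 2 * (M:ℝ)^2 * M' * lam) (2 * M * M' * n) + (2 * M * M') ^ 2 :=
          Nat.add_le_add (Nat.mul_le_mul hMK hQle) hKK
      _ = (2 * M * M') ^ 2 + (2 * M * M') * PCLq Y ((M:ℝ) * M' * lam)
            ((M:ℝ) * c + 2 * (M:ℝ)^2 * M' * lam) (2 * M * M' * n) := Nat.add_comm _ _

end PCLPaper
end
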